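/- arXiv:0903.3812 — 7 statements merged into one kernel-verified Lean document; each statement's English description precedes it below -/
import Mathlib

section
/- Let q ≥ 4 and let G be a graph of minimum order among all graphs H with clique number cl(H) < q−1 and chromatic number χ(H) ≥ r+1. Then F_v(2_r; q−1) ≥ F_v(2_r; q) + α(G) − 1, where α(G) is the independence number of G. -/
/-- The chromatic number of `G` as a natural number. -/
noncomputable def chi {V : Type*} (G : SimpleGraph V) : ℕ := G.chromaticNumber.toNat

/-- The independence number of `G`: the clique number of the complement. -/
noncomputable def indepNum {V : Type*} (G : SimpleGraph V) : ℕ := Gᶜ.cliqueNum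

/-- The vertex Folkman number `F_v(2_r; q)`: the minimum number of vertices of a
graph with clique number `< q` and chromatic number `≥ r + 1`. -/
noncomputable def Fv (r q : ℕ) : ℕ :=
  sInf {n | ∃ G : SimpleGraph (Fin n), G.cliqueNum < q ∧ r + 1 ≤ chi G}

/-- The Ramsey number `R(p, 3)`: the least `n` such that every graph on at least `n`
vertices contains a `p`-clique or an independent set of size `3`. -/
noncomputable def RamseyTri (p : ℕ) : ℕ :=
  sInf {n | ∀ m, n ≤ m → ∀ G : SimpleGraph (Fin m),
    (∃ S : Finset (Fin m), G.IsNClique p S) ∨ (∃ S : Finset (Fin m), Gᶜ.IsNClique 3 S)}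

theorem stmt5 {V : Type*} [Fintype V] (r q : ℕ) (hq : 4 ≤ q) (G : SimpleGraph V)
    (hcl : G.cliqueNum < q - 1) (hchi : r + 1 ≤ chi G)
    (hmin : Fintype.card V = Fv r (q - 1)) :
    Fv r q + indepNum G - 1 ≤ Fv r (q - 1) := by
  classical
  rw [← hmin]
  -- V is nonempty
  have hne : Nonempty V := by
    by_contra h
    rw [not_nonempty_iff] at h
    have h0 : G.chromaticNumber = 0 := @SimpleGraph.chromaticNumber_eq_zero_of_isEmpty _ G h
    simp [chi, h0] at hchi
  -- a maximum independent set
  obtain ⟨I, hI⟩ := Gᶜ.exists_isNClique_cliqueNum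
  have hIcard : I.card = indepNum G := hI.card_eq
  have hα1 : 1 ≤ indepNum G := by
    obtain ⟨v⟩ := hne
    have h1 : ({v} : Finset V).card ≤ Gᶜ.cliqueNum :=
      SimpleGraph.IsClique.card_le_cliqueNum (tc := by simp)
    simpa [indepNum] using h1
  have hαle : indepNum G ≤ Fintype.card V := by
    rw [← hIcard]; exact I.card_le_univ
  -- the cone graph over G restricted to the complement of I
  set S := {v : V // v ∉ I} with hS
  let f : Option S → Option S → Prop := fun x y =>
    match x, y with
    | some a, some b => G.Adj a.1 b.1
    | _, _ => True
  let G' : SimpleGraph (Option S) := SimpleGraph.fromRel f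
  have hadj_ss : ∀ a b : S, G'.Adj (some a) (some b) ↔ G.Adj a.1 b.1 := by
    intro a b
    rw [SimpleGraph.fromRel_adj]
    constructor
    · rintro ⟨hne, h | h⟩
      · exact h
      · exact h.symm
    · intro h
      refine ⟨?_, Or.inl h⟩
      intro hEq
      exact G.loopless.irrefl a.1 (by cases Option.some.inj hEq; exact h)
  have hadj_ns : ∀ a : S, G'.Adj none (some a) := by
    intro a
    rw [SimpleGraph.fromRel_adj]
    exact ⟨by simp, Or.inl trivial⟩
  -- every clique of G' has at most q - 1 vertices
  obtain ⟨v₀⟩ := hne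
  have hcliq : ∀ t : Finset (Option S), G'.IsClique (↑t) → t.card ≤ q - 1 := by
    intro t ht
    set u : Option S → V := fun x => x.elim v₀ Subtype.val with hu
    set t' := t.erase none with ht'
    have hsome : ∀ x ∈ t', ∃ a : S, x = some a := by
      intro x hx
      have hxn : x ≠ none := Finset.ne_of_mem_erase hx
      cases x with
      | none => exact absurd rfl hxn
      | some a => exact ⟨a, rfl⟩
    have hinj : Set.InjOn u ↑t' := by
      intro x hx y hy hxy
      obtain ⟨a, rfl⟩ := hsome x hx
      obtain ⟨b, rfl⟩ := hsome y hy
      simp only [u, Option.elim] at hxy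
      exact congrArg some (Subtype.ext hxy)
    have hclG : G.IsClique ↑(t'.image u) := by
      intro x hx y hy hxy
      simp only [Finset.coe_image, Set.mem_image, Finset.mem_coe] at hx hy
      obtain ⟨x', hx', rfl⟩ := hx
      obtain ⟨y', hy', rfl⟩ := hy
      obtain ⟨a, rfl⟩ := hsome x' hx'
      obtain ⟨b, rfl⟩ := hsome y' hy'
      have hadj := ht (Finset.mem_of_mem_erase hx') (Finset.mem_of_mem_erase hy')
        (by intro hEq; exact hxy (by rw [hEq]))
      exact (hadj_ss a b).mp hadj
    have hle : (t'.image u).card ≤ G.cliqueNum :=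
      SimpleGraph.IsClique.card_le_cliqueNum (tc := hclG)
    have hcard : (t'.image u).card = t'.card := Finset.card_image_of_injOn hinj
    have ht'card : t.card ≤ t'.card + 1 := by
      rw [ht']
      rcases Finset.decidableMem none t with h | h
      · simp [Finset.erase_eq_self.mpr h]
      · rw [Finset.card_erase_of_mem h]; omega
    omega
  have hcliqueNum' : G'.cliqueNum < q := by
    obtain ⟨t, htc⟩ := G'.exists_isNClique_cliqueNum
    have := hcliq t htc.isClique
    rw [htc.card_eq] at this
    omega
  -- colorings of G' give colorings of G
  have hcol : ∀ n, G'.Colorable n → G.Colorable n := by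
    intro n hc
    obtain ⟨C⟩ := hc
    refine ⟨SimpleGraph.Coloring.mk
      (fun v => if h : v ∈ I then C none else C (some ⟨v, h⟩)) ?_⟩
    intro v w hvw
    rcases Finset.decidableMem v I with hv | hv <;>
      rcases Finset.decidableMem w I with hw | hw
    · simp only [dif_neg hv, dif_neg hw]
      exact C.valid ((hadj_ss ⟨v, hv⟩ ⟨w, hw⟩).mpr hvw)
    · simp only [dif_neg hv, dif_pos hw]
      exact (C.valid (hadj_ns ⟨v, hv⟩)).symm
    · simp only [dif_pos hv, dif_neg hw]
      exact C.valid (hadj_ns ⟨w, hw⟩)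
    · exfalso
      have hcompl : Gᶜ.Adj v w := hI.isClique hv hw (G.ne_of_adj hvw)
      exact hcompl.2 hvw
  have hchrom : G.chromaticNumber ≤ G'.chromaticNumber :=
    SimpleGraph.chromaticNumber_le_of_forall_imp hcol
  -- transport G' to Fin m
  set m := Fintype.card (Option S) with hm
  let e : Fin m ≃ Option S := (Fintype.equivFin (Option S)).symm
  let G'' : SimpleGraph (Fin m) := G'.comap e.toEmbedding
  have hiso : G'' ≃g G' := SimpleGraph.Iso.comap e G'
  have hchrom2 : G'.chromaticNumber ≤ G''.chromaticNumber :=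
    SimpleGraph.chromaticNumber_mono_of_hom hiso.symm.toHom
  have hntop : G''.chromaticNumber ≠ ⊤ := by
    have h1 : G''.chromaticNumber ≤ (m : ℕ∞) :=
      SimpleGraph.chromaticNumber_le_iff_colorable.mpr
        (by simpa using G''.colorable_of_fintype)
    intro h
    rw [h] at h1
    exact not_le.mpr (ENat.coe_lt_top m) h1
  have hchi'' : r + 1 ≤ chi G'' := by
    refine le_trans hchi ?_
    exact ENat.toNat_le_toNat (le_trans hchrom hchrom2) hntop
  have hcliqueNum'' : G''.cliqueNum < q := by
    obtain ⟨t, htc⟩ := G''.exists_isNClique_cliqueNum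
    have hcl'' : G'.IsClique ↑(t.image e) := by
      intro x hx y hy hxy
      simp only [Finset.coe_image, Set.mem_image, Finset.mem_coe] at hx hy
      obtain ⟨a, ha, rfl⟩ := hx
      obtain ⟨b, hb, rfl⟩ := hy
      exact htc.isClique ha hb (fun hEq => hxy (by rw [hEq]))
    have h1 : (t.image e).card ≤ q - 1 := hcliq _ hcl''
    have h2 : (t.image e).card = t.card := Finset.card_image_of_injective _ e.injective
    rw [htc.card_eq] at h2
    omega
  -- |Option S| = |V| - α + 1
  have hcardS : Fintype.card S = Fintype.card V - indepNum G := by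
    rw [← hIcard, ← Fintype.card_coe I]
    exact Fintype.card_subtype_compl _
  have hmcard : m = Fintype.card V - indepNum G + 1 := by
    rw [hm, Fintype.card_option, hcardS]
  have hFv : Fv r q ≤ m := Nat.sInf_le ⟨G'', hcliqueNum'', hchi''⟩
  omega
end

section
/- Let r, q be integers with 4 ≤ q < r+3. Then F_v(2_r; q−1) ≥ F_v(2_r; q) + 1. -/
section Helpers

open SimpleGraph

/-- For finite graphs, `r + 1 ≤ chi G` iff `G` is not `r`-colorable. -/
lemma chi_ge_iff {V : Type*} [Fintype V] {G : SimpleGraph V} {r : ℕ} :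
    r + 1 ≤ chi G ↔ ¬ G.Colorable r := by
  constructor
  · intro h hc
    have := hc.chromaticNumber_le
    have h2 : G.chromaticNumber.toNat ≤ r := by
      have hne : G.chromaticNumber ≠ ⊤ := by
        intro ht; rw [ht] at this; exact (by simp : ¬ (⊤ : ℕ∞) ≤ (r : ℕ∞)) this
      exact ENat.toNat_le_of_le_coe this
    unfold chi at h
    omega
  · intro h
    by_contra hlt
    push_neg at hlt
    have hcol : G.Colorable (chi G) := G.colorable_chromaticNumber_of_fintype
    exact h (hcol.mono (by omega))

/-- Colorability transfers backwards along graph homomorphisms given on vertices. -/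
lemma colorable_of_map {V W : Type*} {G : SimpleGraph V} {H : SimpleGraph W}
    (f : V → W) (hf : ∀ {a b}, G.Adj a b → H.Adj (f a) (f b)) {k : ℕ}
    (h : H.Colorable k) : G.Colorable k := by
  obtain ⟨C⟩ := h
  exact ⟨SimpleGraph.Coloring.mk (fun v => C (f v)) (fun hab => C.valid (hf hab))⟩

/-- Any graph on a finite vertex type can be transferred to `Fin (card V)`
preserving clique number bound and chromatic number bound. -/
lemma transfer_to_fin {V : Type*} [Fintype V] (G : SimpleGraph V) {q r m : ℕ}
    (hm : Fintype.card V = m)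
    (hcl : G.cliqueNum < q) (hchi : r + 1 ≤ chi G) :
    ∃ G' : SimpleGraph (Fin m), G'.cliqueNum < q ∧ r + 1 ≤ chi G' := by
  classical
  let e := (Fintype.equivFin V).trans (finCongr hm)
  let G' : SimpleGraph (Fin m) :=
    { Adj := fun a b => G.Adj (e.symm a) (e.symm b)
      symm := ⟨fun a b h => G.symm.symm _ _ h⟩
      loopless := ⟨fun a h => G.loopless.irrefl _ h⟩ }
  have hadj : ∀ {a b}, G'.Adj a b ↔ G.Adj (e.symm a) (e.symm b) := Iff.rfl
  refine ⟨G', ?_, ?_⟩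
  · -- clique number
    obtain ⟨s, hs⟩ := G'.exists_isNClique_cliqueNum
    have hclique : G.IsClique (s.image e.symm) := by
      intro a ha b hb hab
      simp only [Finset.coe_image, Set.mem_image] at ha hb
      obtain ⟨a', ha', rfl⟩ := ha
      obtain ⟨b', hb', rfl⟩ := hb
      have hab' : a' ≠ b' := fun h => hab (by rw [h])
      exact hs.isClique ha' hb' hab'
    have hcard : (s.image e.symm).card = G'.cliqueNum := by
      rw [Finset.card_image_of_injective _ e.symm.injective, hs.card_eq]
    calc G'.cliqueNum = (s.image e.symm).card := hcard.symm
      _ ≤ G.cliqueNum := hclique.card_le_cliqueNum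
      _ < q := hcl
  · rw [chi_ge_iff] at hchi ⊢
    intro hc
    exact hchi (colorable_of_map (fun v => e v)
      (fun {a b} hab => by rw [hadj]; simpa using hab) hc)

/-! ### The shift graph: triangle-free with large chromatic number -/

/-- Vertices of the shift graph on `Fin N`: ordered pairs. -/
abbrev ShiftVert (N : ℕ) := {p : Fin N × Fin N // p.1 < p.2}

/-- The shift graph: `(i,j) ~ (j,k)`. -/
def shiftGraph (N : ℕ) : SimpleGraph (ShiftVert N) where
  Adj p q := p.1.2 = q.1.1 ∨ q.1.2 = p.1.1
  symm := by constructor; intro p q h; tauto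
  loopless := by
    constructor
    intro p h
    rcases h with h | h <;>
    · have := p.2
      rw [h] at this
      exact lt_irrefl _ this

lemma shiftGraph_adj {N : ℕ} {p q : ShiftVert N} :
    (shiftGraph N).Adj p q ↔ (p.1.2 = q.1.1 ∨ q.1.2 = p.1.1) := Iff.rfl

lemma shiftGraph_no_triangle {N : ℕ} {a b c : ShiftVert N}
    (hab : (shiftGraph N).Adj a b) (hbc : (shiftGraph N).Adj b c)
    (hac : (shiftGraph N).Adj a c) : False := by
  obtain ⟨⟨a1, a2⟩, ha⟩ := a
  obtain ⟨⟨b1, b2⟩, hb⟩ := b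
  obtain ⟨⟨c1, c2⟩, hc⟩ := c
  rw [shiftGraph_adj] at hab hbc hac
  simp only [Fin.lt_def] at ha hb hc
  rcases hab with h1 | h1 <;> rcases hbc with h2 | h2 <;> rcases hac with h3 | h3 <;>
    simp only [Fin.ext_iff] at h1 h2 h3 <;> omega

lemma shiftGraph_cliqueNum (N : ℕ) : (shiftGraph N).cliqueNum ≤ 2 := by
  obtain ⟨s, hs⟩ := (shiftGraph N).exists_isNClique_cliqueNum
  by_contra h
  push_neg at h
  have h3 : 3 ≤ s.card := by rw [hs.card_eq]; omega
  obtain ⟨t, hts, htc⟩ := Finset.exists_subset_card_eq h3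
  obtain ⟨a, b, c, hab, hac, hbc, rfl⟩ := Finset.card_eq_three.mp htc
  have ha : a ∈ s := hts (by simp)
  have hb : b ∈ s := hts (by simp)
  have hc : c ∈ s := hts (by simp)
  exact shiftGraph_no_triangle
    (hs.isClique ha hb hab) (hs.isClique hb hc hbc) (hs.isClique ha hc hac)

lemma shiftGraph_not_colorable {N r : ℕ} (h : 2 ^ r < N) :
    ¬ (shiftGraph N).Colorable r := by
  classical
  rintro ⟨C⟩
  -- assign to each i the set of colors of pairs (i, j)
  let S : Fin N → Finset (Fin r) := fun i =>
    Finset.univ.filter (fun c => ∃ p : ShiftVert N, p.1.1 = i ∧ C p = c)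
  have hcard : Fintype.card (Finset (Fin r)) < Fintype.card (Fin N) := by
    simp [h]
  obtain ⟨i, j, hij, hSij⟩ := Fintype.exists_ne_map_eq_of_card_lt S hcard
  -- wlog i < j
  wlog hlt : i < j generalizing i j
  · exact this j i hij.symm hSij.symm (by omega)
  -- the color of the pair (i, j)
  set p : ShiftVert N := ⟨(i, j), hlt⟩ with hp
  have hmem : C p ∈ S i := by
    simp only [S, Finset.mem_filter, Finset.mem_univ, true_and]
    exact ⟨p, rfl, rfl⟩
  rw [hSij] at hmem
  simp only [S, Finset.mem_filter, Finset.mem_univ, true_and] at hmem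
  obtain ⟨q, hq1, hq2⟩ := hmem
  have hadj : (shiftGraph N).Adj p q := by
    left
    exact hq1.symm
  exact C.valid hadj hq2.symm

/-! ### Identification of a nonadjacent pair -/

/-- Identification of a nonadjacent pair: `u` absorbs the neighborhood of `v`,
and `v` is deleted. -/
def identGraph {V : Type*} (G : SimpleGraph V) (u v : V) : SimpleGraph {x : V // x ≠ v} where
  Adj a b := a ≠ b ∧ (G.Adj a b ∨ (a.1 = u ∧ G.Adj v b) ∨ (b.1 = u ∧ G.Adj v a))
  symm := by
    constructor
    rintro a b ⟨hne, h⟩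
    refine ⟨hne.symm, ?_⟩
    rcases h with h | h | h
    · exact Or.inl h.symm
    · exact Or.inr (Or.inr h)
    · exact Or.inr (Or.inl h)
  loopless := by constructor; rintro a ⟨hne, -⟩; exact hne rfl

lemma identGraph_colorable {V : Type*} {G : SimpleGraph V} {u v : V} (hu : u ≠ v)
    (huv : ¬ G.Adj u v) {k : ℕ} (h : (identGraph G u v).Colorable k) : G.Colorable k := by
  classical
  obtain ⟨C⟩ := h
  refine ⟨SimpleGraph.Coloring.mk
    (fun x => if hx : x = v then C ⟨u, hu⟩ else C ⟨x, hx⟩) ?_⟩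
  intro x y hxy
  have hxny := G.ne_of_adj hxy
  by_cases hx : x = v <;> by_cases hy : y = v
  · exact absurd (hx.trans hy.symm) hxny
  · simp only [dif_pos hx, dif_neg hy]
    have hvy : G.Adj v y := hx ▸ hxy
    have hyu : y ≠ u := by
      rintro rfl
      exact huv (G.adj_symm hvy)
    have hadj : (identGraph G u v).Adj ⟨u, hu⟩ ⟨y, hy⟩ :=
      ⟨by simp [Subtype.ext_iff, hyu.symm], Or.inr (Or.inl ⟨rfl, hvy⟩)⟩
    exact C.valid hadj
  · simp only [dif_pos hy, dif_neg hx]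
    have hxv : G.Adj x v := hy ▸ hxy
    have hxu : x ≠ u := by
      rintro rfl
      exact huv hxv
    have hadj : (identGraph G u v).Adj ⟨x, hx⟩ ⟨u, hu⟩ :=
      ⟨by simp [Subtype.ext_iff, hxu], Or.inr (Or.inr ⟨rfl, G.adj_symm hxv⟩)⟩
    exact C.valid hadj
  · simp only [dif_neg hx, dif_neg hy]
    exact C.valid ⟨by simp [Subtype.ext_iff, hxny], Or.inl hxy⟩

lemma identGraph_cliqueNum {V : Type*} [Fintype V] [DecidableEq V]
    (G : SimpleGraph V) (u v : V) (hu : u ≠ v) :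
    (identGraph G u v).cliqueNum ≤ G.cliqueNum + 1 := by
  obtain ⟨s, hs⟩ := (identGraph G u v).exists_isNClique_cliqueNum
  set w : {x : V // x ≠ v} := ⟨u, hu⟩ with hw
  have hclique : G.IsClique ((s.erase w).image Subtype.val) := by
    intro a ha b hb hab
    simp only [Finset.coe_image, Set.mem_image, Finset.mem_coe, Finset.mem_erase] at ha hb
    obtain ⟨a', ⟨haw, has⟩, rfl⟩ := ha
    obtain ⟨b', ⟨hbw, hbs⟩, rfl⟩ := hb
    have hab' : a' ≠ b' := fun h => hab (by rw [h])
    have hadj := hs.isClique has hbs hab'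
    rcases hadj.2 with h | h | h
    · exact h
    · exact absurd (Subtype.ext h.1) haw
    · exact absurd (Subtype.ext h.1) hbw
  have hcard : ((s.erase w).image Subtype.val).card = (s.erase w).card :=
    Finset.card_image_of_injective _ Subtype.val_injective
  have hle := hclique.card_le_cliqueNum
  rw [hcard] at hle
  have herase := Finset.pred_card_le_card_erase (a := w) (s := s)
  rw [hs.card_eq] at herase
  omega

/-- From a witness for `q - 1` on `n` vertices, build a witness for `q`
on `n - 1` vertices. -/
lemma key_step {n r q : ℕ} (hq : 4 ≤ q) (hqr : q < r + 3)
    (hn : ∃ G : SimpleGraph (Fin n), G.cliqueNum < q - 1 ∧ r + 1 ≤ chi G) :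
    ∃ G' : SimpleGraph (Fin (n - 1)), G'.cliqueNum < q ∧ r + 1 ≤ chi G' := by
  classical
  obtain ⟨G, hcl, hchi⟩ := hn
  -- there is a nonadjacent pair
  have hpair : ∃ u v : Fin n, u ≠ v ∧ ¬ G.Adj u v := by
    by_contra h
    push_neg at h
    have hclq : G.IsClique (Finset.univ : Finset (Fin n)) :=
      fun a _ b _ hab => h a b hab
    have hle := hclq.card_le_cliqueNum
    rw [Finset.card_univ, Fintype.card_fin] at hle
    have hchile : chi G ≤ n := by
      have := (G.colorable_of_fintype).chromaticNumber_le
      rw [Fintype.card_fin] at this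
      unfold chi
      exact ENat.toNat_le_of_le_coe this
    omega
  obtain ⟨u, v, huv, hadj⟩ := hpair
  have hcard : Fintype.card {x : Fin n // x ≠ v} = n - 1 := by
    simp [Fintype.card_subtype_compl, Fintype.card_subtype_eq]
  have hcl' : (identGraph G u v).cliqueNum < q := by
    have := identGraph_cliqueNum G u v huv
    omega
  have hchi' : r + 1 ≤ chi (identGraph G u v) := by
    rw [chi_ge_iff] at hchi ⊢
    exact fun hc => hchi (identGraph_colorable huv hadj hc)
  exact transfer_to_fin (identGraph G u v) hcard hcl' hchi'

end Helpers

theorem stmt6 (r q : ℕ) (hq : 4 ≤ q) (hqr : q < r + 3) :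
    Fv r q + 1 ≤ Fv r (q - 1) := by
  classical
  set S : Set ℕ := {n | ∃ G : SimpleGraph (Fin n), G.cliqueNum < q - 1 ∧ r + 1 ≤ chi G}
    with hS
  have hne : S.Nonempty := by
    have h2 : (2 : ℕ) ^ r < 2 ^ r + 1 := Nat.lt_succ_self _
    have hcl : (shiftGraph (2 ^ r + 1)).cliqueNum < q - 1 :=
      lt_of_le_of_lt (shiftGraph_cliqueNum _) (by omega)
    have hchi : r + 1 ≤ chi (shiftGraph (2 ^ r + 1)) :=
      chi_ge_iff.mpr (shiftGraph_not_colorable h2)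
    obtain ⟨G', h1, h2'⟩ := transfer_to_fin _ rfl hcl hchi
    exact ⟨_, G', h1, h2'⟩
  have hmem : Fv r (q - 1) ∈ S := Nat.sInf_mem hne
  set n := Fv r (q - 1) with hn
  have hn1 : 1 ≤ n := by
    by_contra h
    push_neg at h
    interval_cases n
    obtain ⟨G, -, hchi⟩ := hmem
    have : G.chromaticNumber = 0 := G.chromaticNumber_eq_zero_of_isEmpty
    unfold chi at hchi
    rw [this] at hchi
    simp at hchi
  obtain ⟨G', hc', hchi'⟩ := key_step hq hqr hmem
  have hle : Fv r q ≤ n - 1 := Nat.sInf_le ⟨G', hc', hchi'⟩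
  omega
end

section
/- Let q be an integer with 3 ≤ q < r+3 and let G be a graph of minimum order among all graphs H with cl(H) < q and χ(H) ≥ r+1. Then cl(G) = q − 1. -/
lemma chi_succ_le_iff {V : Type*} [Fintype V] (H : SimpleGraph V) (r : ℕ) :
    r + 1 ≤ chi H ↔ ¬ H.Colorable r := by
  unfold chi
  constructor
  · intro h hc
    have h1 : H.chromaticNumber ≤ (r : ℕ∞) := hc.chromaticNumber_le
    have h2 : H.chromaticNumber.toNat ≤ r := by
      have := ENat.toNat_le_toNat h1 (by simp)
      simpa using this
    omega
  · intro h
    by_contra hlt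
    push_neg at hlt
    have := H.colorable_chromaticNumber_of_fintype
    exact h (this.mono (by omega))

lemma chi_le_card {V : Type*} [Fintype V] (H : SimpleGraph V) :
    chi H ≤ Fintype.card V := by
  unfold chi
  have h1 : H.chromaticNumber ≤ (Fintype.card V : ℕ∞) :=
    H.colorable_of_fintype.chromaticNumber_le
  have := ENat.toNat_le_toNat h1 (by simp)
  simpa using this

theorem stmt9 {V : Type*} [Fintype V] (r q : ℕ) (hq : 3 ≤ q) (hqr : q < r + 3)
    (G : SimpleGraph V) (hcl : G.cliqueNum < q) (hchi : r + 1 ≤ chi G)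
    (hmin : Fintype.card V = Fv r q) :
    G.cliqueNum = q - 1 := by
  classical
  by_contra hne
  have hle : G.cliqueNum ≤ q - 2 := by omega
  set n := Fintype.card V with hn
  have hchin : r + 1 ≤ n := le_trans hchi (chi_le_card G)
  have hGncol : ¬ G.Colorable r := (chi_succ_le_iff G r).mp hchi
  -- there exist distinct nonadjacent vertices
  have hnonadj : ∃ u v : V, u ≠ v ∧ ¬ G.Adj u v := by
    by_contra hc
    push_neg at hc
    have hclique : G.IsClique (Finset.univ : Finset V) := by
      intro a _ b _ hab
      exact hc a b hab
    have := hclique.card_le_cliqueNum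
    simp only [Finset.card_univ] at this
    omega
  obtain ⟨u, v, huv, hnadj⟩ := hnonadj
  -- contracted graph on vertices ≠ v
  let W := {x : V // x ≠ v}
  let uW : W := ⟨u, huv⟩
  let G' : SimpleGraph W :=
    { Adj := fun a b => a ≠ b ∧ (G.Adj a b ∨ ((a : V) = u ∧ G.Adj v b) ∨ ((b : V) = u ∧ G.Adj v a))
      symm := ⟨by
        rintro a b ⟨hab, h⟩
        refine ⟨hab.symm, ?_⟩
        rcases h with h | ⟨h1, h2⟩ | ⟨h1, h2⟩
        · exact Or.inl h.symm
        · exact Or.inr (Or.inr ⟨h1, h2⟩)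
        · exact Or.inr (Or.inl ⟨h1, h2⟩)⟩
      loopless := ⟨fun a h => h.1 rfl⟩ }
  have hcardW : Fintype.card W = n - 1 := by
    calc Fintype.card W
        = Fintype.card {x : V // ¬ x = v} :=
          Fintype.card_congr (Equiv.subtypeEquivRight (fun _ => Iff.rfl))
      _ = n - 1 := by
          rw [Fintype.card_subtype_compl, Fintype.card_subtype_eq]
  -- coloring transfer
  have hcol : ∀ k : ℕ, G'.Colorable k → G.Colorable k := by
    rintro k ⟨c⟩
    refine ⟨SimpleGraph.Coloring.mk
      (fun x => if h : x = v then c uW else c ⟨x, h⟩) ?_⟩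
    intro x y hadj
    have hxy : x ≠ y := G.ne_of_adj hadj
    by_cases hx : x = v <;> by_cases hy : y = v
    · exact absurd (hx ▸ hy ▸ hadj) (G.irrefl)
    · simp only [hx, dif_pos, dif_neg hy]
      apply c.valid
      refine ⟨?_, Or.inr (Or.inl ⟨rfl, hx ▸ hadj⟩)⟩
      intro he
      have : u = y := congrArg Subtype.val he
      subst this
      exact hnadj (hx ▸ hadj.symm)
    · simp only [hy, dif_pos, dif_neg hx]
      apply c.valid
      refine ⟨?_, Or.inr (Or.inr ⟨rfl, hy ▸ hadj.symm⟩)⟩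
      intro he
      have : x = u := congrArg Subtype.val he
      subst this
      exact hnadj (hy ▸ hadj)
    · simp only [dif_neg hx, dif_neg hy]
      apply c.valid
      exact ⟨fun he => hxy (congrArg Subtype.val he), Or.inl hadj⟩
  have hG'ncol : ¬ G'.Colorable r := fun hc => hGncol (hcol r hc)
  -- clique transfer
  have hcliq : ∀ (m : ℕ) (S : Finset W), G'.IsNClique m S → m ≤ q - 1 := by
    intro m S hS
    let T : Finset V := (S.erase uW).image Subtype.val
    have hTcard : (S.erase uW).card = T.card :=
      (Finset.card_image_of_injective _ Subtype.val_injective).symm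
    have hTclique : G.IsClique (T : Set V) := by
      intro a ha b hb hab
      simp only [T, Finset.coe_image, Set.mem_image, Finset.mem_coe] at ha hb
      obtain ⟨a', ha', rfl⟩ := ha
      obtain ⟨b', hb', rfl⟩ := hb
      have ha'u : (a' : V) ≠ u := fun h =>
        (Finset.ne_of_mem_erase ha') (Subtype.ext h)
      have hb'u : (b' : V) ≠ u := fun h =>
        (Finset.ne_of_mem_erase hb') (Subtype.ext h)
      have hadj' := hS.isClique (Finset.mem_of_mem_erase ha')
        (Finset.mem_of_mem_erase hb') (fun h => hab (congrArg Subtype.val h))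
      rcases hadj'.2 with h | ⟨h1, _⟩ | ⟨h1, _⟩
      · exact h
      · exact absurd h1 ha'u
      · exact absurd h1 hb'u
    have h1 : T.card ≤ G.cliqueNum := hTclique.card_le_cliqueNum
    have h2 : m - 1 ≤ (S.erase uW).card := by
      have h := Finset.pred_card_le_card_erase (s := S) (a := uW)
      rw [hS.card_eq] at h
      exact h
    have h3 : (S.erase uW).card ≤ S.card := Finset.card_erase_le
    have hScard := hS.card_eq
    omega
  have hG'cl : G'.cliqueNum < q := by
    obtain ⟨S, hS⟩ := G'.exists_isNClique_cliqueNum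
    have := hcliq _ S hS
    omega
  -- transfer to Fin (n-1)
  have eW : W ≃ Fin (n - 1) := Fintype.equivFinOfCardEq hcardW
  let G'' : SimpleGraph (Fin (n - 1)) := SimpleGraph.comap (eW.symm : Fin (n-1) → W) G'
  have hG''col : ∀ k : ℕ, G''.Colorable k → G'.Colorable k := by
    rintro k ⟨c⟩
    refine ⟨SimpleGraph.Coloring.mk (fun w => c (eW w)) ?_⟩
    intro a b hab
    apply c.valid
    show G'.Adj (eW.symm (eW a)) (eW.symm (eW b))
    simpa using hab
  have hG''ncol : ¬ G''.Colorable r := fun hc => hG'ncol (hG''col r hc)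
  have hG''cl : G''.cliqueNum < q := by
    obtain ⟨S, hS⟩ := G''.exists_isNClique_cliqueNum
    have hclS : G'.IsNClique G''.cliqueNum (S.image (eW.symm)) := by
      constructor
      · intro a ha b hb hab
        simp only [Finset.coe_image, Set.mem_image, Finset.mem_coe] at ha hb
        obtain ⟨a', ha', rfl⟩ := ha
        obtain ⟨b', hb', rfl⟩ := hb
        exact hS.isClique ha' hb' (fun h => hab (congrArg _ h))
      · rw [Finset.card_image_of_injective _ eW.symm.injective, hS.card_eq]
    have := hcliq _ _ hclS
    omega
  have hmem : (n - 1) ∈ {m | ∃ H : SimpleGraph (Fin m), H.cliqueNum < q ∧ r + 1 ≤ chi H} :=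
    ⟨G'', hG''cl, (chi_succ_le_iff G'' r).mpr hG''ncol⟩
  have hFv : Fv r q ≤ n - 1 := Nat.sInf_le hmem
  omega
end

section
/- Let m, k be positive integers with m ≥ k+3 and 2m−1 < R(m−k, 3). Suppose F_v(2_r; r−k+1) ≥ r+m for all r ≥ m−1. Then F_v(2_r; r−k+1) = r+m for all r ≥ m−1. -/
theorem stmt10 (m k : ℕ) (hm : 1 ≤ m) (hk : 1 ≤ k) (hmk : k + 3 ≤ m)
    (hR : 2 * m - 1 < RamseyTri (m - k))
    (hlow : ∀ r, m - 1 ≤ r → r + m ≤ Fv r (r - k + 1)) :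
    ∀ r, m - 1 ≤ r → Fv r (r - k + 1) = r + m := by
  -- Step 1: extract a Ramsey graph `H` on `2m-1` vertices with no `(m-k)`-clique
  -- and no independent set of size 3.
  have h2 : (2 * m - 1) ∉ {n | ∀ m', n ≤ m' → ∀ G : SimpleGraph (Fin m'),
      (∃ S : Finset (Fin m'), G.IsNClique (m - k) S) ∨
      (∃ S : Finset (Fin m'), Gᶜ.IsNClique 3 S)} := by
    intro hmem
    have := Nat.sInf_le hmem
    rw [RamseyTri] at hR
    omega
  simp only [Set.mem_setOf_eq, not_forall] at h2
  obtain ⟨m', hle, G₀, hG₀⟩ := h2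
  push_neg at hG₀
  obtain ⟨hG₀1, hG₀2⟩ := hG₀
  set H : SimpleGraph (Fin (2 * m - 1)) := G₀.comap (Fin.castLE hle) with hHdef
  have hinj : Function.Injective (Fin.castLE hle) := Fin.castLE_injective hle
  -- H has no (m-k)-clique
  have hH1 : ∀ S : Finset (Fin (2 * m - 1)), ¬ H.IsNClique (m - k) S := by
    intro S hS
    refine hG₀1 (S.image (Fin.castLE hle)) ⟨?_, ?_⟩
    · intro x hx y hy hxy
      simp only [Finset.coe_image, Set.mem_image, Finset.mem_coe] at hx hy
      obtain ⟨u, hu, rfl⟩ := hx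
      obtain ⟨v, hv, rfl⟩ := hy
      have huv : u ≠ v := fun h => hxy (by rw [h])
      exact hS.1 hu hv huv
    · rw [Finset.card_image_of_injective _ hinj, hS.2]
  -- H has no independent set of size 3
  have hH2 : ∀ u v w : Fin (2 * m - 1), u ≠ v → u ≠ w → v ≠ w →
      ¬ H.Adj u v → ¬ H.Adj u w → ¬ H.Adj v w → False := by
    intro u v w huv huw hvw hauv hauw havw
    refine hG₀2 ({Fin.castLE hle u, Fin.castLE hle v, Fin.castLE hle w}) ⟨?_, ?_⟩
    · intro x hx y hy hxy
      simp only [Finset.coe_insert, Set.mem_insert_iff, Finset.coe_singleton,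
        Set.mem_singleton_iff] at hx hy
      have key : ∀ p q : Fin (2 * m - 1), p ≠ q → ¬ H.Adj p q →
          G₀ᶜ.Adj (Fin.castLE hle p) (Fin.castLE hle q) := by
        intro p q hpq hpa
        rw [SimpleGraph.compl_adj]
        exact ⟨fun h => hpq (hinj h), hpa⟩
      rcases hx with rfl | rfl | rfl <;> rcases hy with rfl | rfl | rfl <;>
        first
          | exact absurd rfl hxy
          | exact key _ _ huv hauv
          | exact (key _ _ huv hauv).symm
          | exact key _ _ huw hauw
          | exact (key _ _ huw hauw).symm
          | exact key _ _ hvw havw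
          | exact (key _ _ hvw havw).symm
    · rw [Finset.card_eq_three]
      exact ⟨_, _, _, fun h => huv (hinj h), fun h => huw (hinj h),
        fun h => hvw (hinj h), rfl⟩
  -- Step 2: for each r ≥ m - 1, build the witness graph on r + m vertices.
  intro r hr
  set a := r + 1 - m with hadef
  have hram : r + m = a + (2 * m - 1) := by omega
  have hpos : 0 < 2 * m - 1 := by omega
  -- the projection to the H-part
  have hf : ∀ v : Fin (r + m), v.val - a < 2 * m - 1 := by
    intro v
    have := v.isLt
    omega
  set f : Fin (r + m) → Fin (2 * m - 1) := fun v => ⟨v.val - a, hf v⟩ with hfdef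
  set G' : SimpleGraph (Fin (r + m)) :=
    { Adj := fun u v => u ≠ v ∧ (u.val < a ∨ v.val < a ∨ H.Adj (f u) (f v))
      symm := ⟨by
        intro u v ⟨h1, h2⟩
        refine ⟨h1.symm, ?_⟩
        rcases h2 with h | h | h
        · exact Or.inr (Or.inl h)
        · exact Or.inl h
        · exact Or.inr (Or.inr h.symm)⟩
      loopless := ⟨fun u h => h.1 rfl⟩ } with hG'def
  have hG'adj : ∀ u v : Fin (r + m),
      G'.Adj u v ↔ u ≠ v ∧ (u.val < a ∨ v.val < a ∨ H.Adj (f u) (f v)) := fun _ _ => Iff.rfl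
  -- f is injective on vertices in the H-part
  have hfinj : ∀ u v : Fin (r + m), ¬ u.val < a → ¬ v.val < a → f u = f v → u = v := by
    intro u v hu hv h
    have : u.val - a = v.val - a := congrArg Fin.val h
    exact Fin.ext (by omega)
  -- clique number bound
  have hclique : G'.cliqueNum ≤ r - k := by
    obtain ⟨S, hS⟩ := G'.exists_isNClique_cliqueNum
    rw [← hS.2]
    have hsplit := Finset.card_filter_add_card_filter_not
      (s := S) (p := fun v => v.val < a)
    set S₁ := S.filter (fun v => v.val < a) with hS₁
    set S₂ := S.filter (fun v => ¬ v.val < a) with hS₂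
    have h1 : S₁.card ≤ a := by
      have : S₁.card ≤ (Finset.range a).card := by
        apply Finset.card_le_card_of_injOn (fun v => v.val)
        · intro x hx
          rw [hS₁, Finset.mem_coe, Finset.mem_filter] at hx
          exact Finset.mem_range.mpr hx.2
        · intro x _ y _ h
          exact Fin.ext h
      simpa using this
    have h2 : S₂.card ≤ m - k - 1 := by
      by_contra hcon
      push_neg at hcon
      have hmk' : m - k ≤ S₂.card := by omega
      -- image of S₂ under f is a clique in H
      have himg : H.IsClique (S₂.image f) := by
        intro x hx y hy hxy
        simp only [Finset.coe_image, Set.mem_image, Finset.mem_coe] at hx hy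
        obtain ⟨u, hu, rfl⟩ := hx
        obtain ⟨v, hv, rfl⟩ := hy
        rw [hS₂, Finset.mem_filter] at hu hv
        have huv : u ≠ v := fun h => hxy (by rw [h])
        have := (hS.1 hu.1 hv.1 huv).2
        rcases this with h | h | h
        · exact absurd h hu.2
        · exact absurd h hv.2
        · exact h
      have hcard : m - k ≤ (S₂.image f).card := by
        have : (S₂.image f).card = S₂.card := by
          apply Finset.card_image_of_injOn
          intro x hx y hy h
          simp only [hS₂, Finset.mem_coe, Finset.mem_filter] at hx hy
          exact hfinj x y hx.2 hy.2 h
        omega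
      obtain ⟨T, hTsub, hTcard⟩ := Finset.exists_subset_card_eq hcard
      exact hH1 T ⟨himg.subset hTsub, hTcard⟩
    omega
  -- chromatic number bound: G' is not r-colorable
  have hnotcol : ¬ G'.Colorable r := by
    rintro ⟨C⟩
    classical
    set A : Finset (Fin r) :=
      (Finset.univ.filter (fun v : Fin (r + m) => v.val < a)).image C with hAdef
    -- the colors of clique-part vertices: exactly a of them
    have hAcard : A.card = a := by
      rw [hAdef]
      rw [Finset.card_image_of_injOn]
      · -- card of the filter is a
        have : (Finset.univ.filter (fun v : Fin (r + m) => v.val < a)).card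
            = (Finset.range a).card := by
          apply Finset.card_bij (fun v _ => v.val)
          · intro x hx
            rw [Finset.mem_filter] at hx
            exact Finset.mem_range.mpr hx.2
          · intro x _ y _ h
            exact Fin.ext h
          · intro b hb
            rw [Finset.mem_range] at hb
            refine ⟨⟨b, by omega⟩, ?_, rfl⟩
            rw [Finset.mem_filter]
            exact ⟨Finset.mem_univ _, hb⟩
        simpa using this
      · intro x hx y hy hxy
        simp only [Finset.coe_filter, Set.mem_setOf_eq] at hx hy
        by_contra hne
        exact C.valid ((hG'adj x y).mpr ⟨hne, Or.inl hx.2⟩) hxy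
    have hAle : A.card ≤ r := by
      have := A.card_le_univ
      simpa using this
    -- fiber bound for each color
    have hfib : ∀ c : Fin r,
        (Finset.univ.filter (fun v : Fin (r + m) => C v = c)).card
          ≤ if c ∈ A then 1 else 2 := by
      intro c
      by_cases hc : c ∈ A
      · simp only [hc, if_true]
        rw [hAdef, Finset.mem_image] at hc
        obtain ⟨u, hu, hcu⟩ := hc
        rw [Finset.mem_filter] at hu
        rw [Finset.card_le_one]
        intro x hx y hy
        rw [Finset.mem_filter] at hx hy
        -- any vertex with color c equals u
        have key : ∀ w : Fin (r + m), C w = c → w = u := by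
          intro w hw
          by_contra hne
          have hadj : G'.Adj u w := (hG'adj u w).mpr ⟨fun h => hne h.symm, Or.inl hu.2⟩
          exact C.valid hadj (by rw [hcu, hw])
        rw [key x hx.2, key y hy.2]
      · simp only [hc, if_false]
        by_contra hcon
        push_neg at hcon
        rw [Finset.two_lt_card_iff] at hcon
        obtain ⟨u, v, w, hu, hv, hw, huv, huw, hvw⟩ := hcon
        rw [Finset.mem_filter] at hu hv hw
        -- none of u, v, w is in the clique part
        have hnc : ∀ x : Fin (r + m), C x = c → ¬ x.val < a := by
          intro x hx hxa
          apply hc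
          rw [hAdef, Finset.mem_image]
          exact ⟨x, Finset.mem_filter.mpr ⟨Finset.mem_univ _, hxa⟩, hx⟩
        have hua := hnc u hu.2
        have hva := hnc v hv.2
        have hwa := hnc w hw.2
        -- same color ⇒ non-adjacent in G' ⇒ non-adjacent in H
        have hna : ∀ x y : Fin (r + m), x ≠ y → C x = c → C y = c →
            ¬ x.val < a → ¬ y.val < a → ¬ H.Adj (f x) (f y) := by
          intro x y hxy hcx hcy hxa hya hadj
          exact C.valid ((hG'adj x y).mpr ⟨hxy, Or.inr (Or.inr hadj)⟩)
            (by rw [hcx, hcy])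
        have hfuv : f u ≠ f v := fun h => huv (hfinj u v hua hva h)
        have hfuw : f u ≠ f w := fun h => huw (hfinj u w hua hwa h)
        have hfvw : f v ≠ f w := fun h => hvw (hfinj v w hva hwa h)
        exact hH2 (f u) (f v) (f w) hfuv hfuw hfvw
          (hna u v huv hu.2 hv.2 hua hva)
          (hna u w huw hu.2 hw.2 hua hwa)
          (hna v w hvw hv.2 hw.2 hva hwa)
    -- total count
    have htot : r + m = ∑ c : Fin r,
        (Finset.univ.filter (fun v : Fin (r + m) => C v = c)).card := by
      have := Finset.card_eq_sum_card_fiberwise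
        (f := fun v : Fin (r + m) => C v) (s := Finset.univ) (t := Finset.univ)
        (fun x _ => Finset.mem_univ _)
      simpa using this
    have hbound : (r + m : ℕ) ≤ ∑ c : Fin r, (if c ∈ A then 1 else 2) := by
      rw [htot]
      exact Finset.sum_le_sum (fun c _ => hfib c)
    have hval : ∑ c : Fin r, (if c ∈ A then 1 else 2)
        = A.card * 1 + (r - A.card) * 2 := by
      rw [Finset.sum_ite, Finset.sum_const, Finset.sum_const]
      have e1 : Finset.univ.filter (fun c : Fin r => c ∈ A) = A := by
        ext c; simp
      have e2 : (Finset.univ.filter (fun c : Fin r => c ∉ A)).card = r - A.card := by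
        have : Finset.univ.filter (fun c : Fin r => c ∉ A) = Finset.univ \ A := by
          ext c; simp
        rw [this, Finset.card_sdiff_of_subset (Finset.subset_univ _)]
        simp
      rw [e1, e2]
      simp [mul_comm]
    rw [hval, hAcard] at hbound
    omega
  -- conclude r + 1 ≤ chi G'
  have hchi : r + 1 ≤ chi G' := by
    by_contra hcon
    push_neg at hcon
    have hcol : G'.Colorable (chi G') := G'.colorable_chromaticNumber_of_fintype
    exact hnotcol (hcol.mono (by omega))
  -- Step 3: conclude
  have hub : Fv r (r - k + 1) ≤ r + m := by
    apply Nat.sInf_le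
    exact ⟨G', by omega, hchi⟩
  exact le_antisymm hub (hlow r hr)
end

section
/- Let m, k be positive integers with 2m−1 < R(m−k, 3) and m ≥ k+3. Then F_v(2_r; r−k+1) ≤ r+m for all r ≥ m−1. -/
lemma key_construction (m k r : ℕ) (hk : 1 ≤ k) (hmk : k + 3 ≤ m) (hr : m ≤ r + 1)
    (H : SimpleGraph (Fin (2 * m - 1)))
    (hHc : ∀ s : Finset (Fin (2 * m - 1)), H.IsClique s → s.card + k + 1 ≤ m)
    (hHi : ∀ s : Finset (Fin (2 * m - 1)), Hᶜ.IsClique s → s.card ≤ 2) :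
    ∃ G : SimpleGraph (Fin (r + m)), G.cliqueNum < r - k + 1 ∧ r + 1 ≤ chi G := by
  classical
  set t := r + 1 - m with ht
  have hpos : 0 < 2 * m - 1 := by omega
  have htot : t + (2 * m - 1) = r + m := by omega
  let f : Fin (r + m) → Fin (2 * m - 1) :=
    fun v => ⟨(v.val - t) % (2 * m - 1), Nat.mod_lt _ hpos⟩
  have hf : ∀ v : Fin (r + m), t ≤ v.val → (f v).val = v.val - t := by
    intro v hv
    have := v.isLt
    exact Nat.mod_eq_of_lt (by omega)
  have hfinj : ∀ u v : Fin (r + m), t ≤ u.val → t ≤ v.val → f u = f v → u = v := by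
    intro u v hu hv h
    have h1 := hf u hu
    have h2 := hf v hv
    have : (f u).val = (f v).val := by rw [h]
    exact Fin.ext (by omega)
  let G : SimpleGraph (Fin (r + m)) :=
    { Adj := fun u v => u ≠ v ∧ (u.val < t ∨ v.val < t ∨ H.Adj (f u) (f v))
      symm := by
        constructor
        rintro u v ⟨h1, h2⟩
        refine ⟨h1.symm, ?_⟩
        rcases h2 with h | h | h
        · exact Or.inr (Or.inl h)
        · exact Or.inl h
        · exact Or.inr (Or.inr (H.symm.symm _ _ h))
      loopless := ⟨fun v h => h.1 rfl⟩ }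
  refine ⟨G, ?_, ?_⟩
  · -- clique number bound
    have hle : G.cliqueNum ≤ r - k := by
      obtain ⟨s, hs⟩ := G.exists_isNClique_cliqueNum
      rw [← hs.card_eq]
      have hsplit := Finset.card_filter_add_card_filter_not
        (s := s) (p := fun v : Fin (r + m) => v.val < t)
      set sA := s.filter (fun v : Fin (r + m) => v.val < t) with hsA
      set sB := s.filter (fun v : Fin (r + m) => ¬ v.val < t) with hsB
      have hA : sA.card ≤ t := by
        have : sA.card ≤ (Finset.range t).card := by
          apply Finset.card_le_card_of_injOn Fin.val
          · intro a ha
            rw [hsA, Finset.mem_coe, Finset.mem_filter] at ha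
            exact Finset.mem_coe.mpr (Finset.mem_range.mpr ha.2)
          · intro a _ b _ hab
            exact Fin.ext hab
        simpa using this
      have hB : sB.card + k + 1 ≤ m := by
        have hinj : Set.InjOn f sB := by
          intro u hu v hv huv
          simp only [hsB, Finset.coe_filter, Set.mem_setOf_eq] at hu hv
          exact hfinj u v (by omega) (by omega) huv
        have hcl : H.IsClique ((sB.image f : Finset (Fin (2 * m - 1))) : Set (Fin (2 * m - 1))) := by
          intro a ha b hb hab
          simp only [Finset.coe_image, Set.mem_image, Finset.mem_coe] at ha hb
          obtain ⟨u, hu, rfl⟩ := ha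
          obtain ⟨v, hv, rfl⟩ := hb
          have huv : u ≠ v := fun h => hab (by rw [h])
          rw [hsB, Finset.mem_filter] at hu hv
          have hadj := hs.isClique hu.1 hv.1 huv
          rcases hadj.2 with h | h | h
          · exact absurd h hu.2
          · exact absurd h hv.2
          · exact h
        have := hHc _ hcl
        rwa [Finset.card_image_of_injOn hinj] at this
      omega
    omega
  · -- chromatic number bound
    have hcol : G.Colorable (chi G) := G.colorable_chromaticNumber_of_fintype
    set c := chi G with hc
    obtain ⟨C⟩ := hcol
    have hcard : (Finset.univ : Finset (Fin (r + m))).card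
        = ∑ i : Fin c, (Finset.univ.filter (fun v => C v = i)).card :=
      Finset.card_eq_sum_card_fiberwise (fun x _ => Finset.mem_univ _)
    set T : Finset (Fin c) :=
      (Finset.univ.filter (fun v : Fin (r + m) => v.val < t)).image C with hT
    have hTcard : t ≤ T.card := by
      have hinj : Set.InjOn C (Finset.univ.filter (fun v : Fin (r + m) => v.val < t)) := by
        intro u hu v hv huv
        simp only [Finset.coe_filter, Set.mem_setOf_eq] at hu hv
        by_contra hne
        exact C.valid (⟨hne, Or.inl hu.2⟩ : G.Adj u v) huv
      have hcardA : (Finset.univ.filter (fun v : Fin (r + m) => v.val < t)).card = t := by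
        have h1 : (Finset.univ.filter (fun v : Fin (r + m) => v.val < t)).card
            = (Finset.range t).card := by
          apply Finset.card_bij (fun (a : Fin (r + m)) _ => a.val)
          · intro a ha
            simp only [Finset.mem_filter] at ha
            exact Finset.mem_range.mpr ha.2
          · intro a _ b _ hab
            exact Fin.ext hab
          · intro b hb
            rw [Finset.mem_range] at hb
            refine ⟨⟨b, by omega⟩, ?_, rfl⟩
            simp [hb]
        simpa using h1
      rw [hT, Finset.card_image_of_injOn hinj, hcardA]
    have key : ∀ i : Fin c,
        (Finset.univ.filter (fun v => C v = i)).card + (if i ∈ T then 1 else 0) ≤ 2 := by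
      intro i
      by_cases hi : i ∈ T
      · simp only [hi, if_true]
        rw [hT, Finset.mem_image] at hi
        obtain ⟨a, ha, hCa⟩ := hi
        rw [Finset.mem_filter] at ha
        have hsub : Finset.univ.filter (fun v => C v = i) ⊆ {a} := by
          intro u hu
          rw [Finset.mem_filter] at hu
          rw [Finset.mem_singleton]
          by_contra hne
          have hadj : G.Adj a u := ⟨fun h => hne h.symm, Or.inl ha.2⟩
          exact C.valid hadj (hCa.trans hu.2.symm)
        have := Finset.card_le_card hsub
        simp only [Finset.card_singleton] at this
        omega
      · simp only [hi, if_false]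
        set F := Finset.univ.filter (fun v => C v = i) with hF
        have hFB : ∀ u ∈ F, t ≤ u.val := by
          intro u hu
          rw [hF, Finset.mem_filter] at hu
          by_contra h
          exact hi (Finset.mem_image.mpr
            ⟨u, Finset.mem_filter.mpr ⟨Finset.mem_univ _, by omega⟩, hu.2⟩)
        have hinj : Set.InjOn f F := by
          intro u hu v hv huv
          exact hfinj u v (hFB u hu) (hFB v hv) huv
        have hcl : Hᶜ.IsClique ((F.image f : Finset (Fin (2 * m - 1))) : Set (Fin (2 * m - 1))) := by
          intro a ha b hb hab
          simp only [Finset.coe_image, Set.mem_image, Finset.mem_coe] at ha hb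
          obtain ⟨u, hu, rfl⟩ := ha
          obtain ⟨v, hv, rfl⟩ := hb
          have huv : u ≠ v := fun h => hab (by rw [h])
          refine ⟨hab, ?_⟩
          intro hH
          have huF := hu
          have hvF := hv
          rw [hF, Finset.mem_filter] at huF hvF
          have hadj : G.Adj u v := ⟨huv, Or.inr (Or.inr hH)⟩
          exact C.valid hadj (huF.2.trans hvF.2.symm)
        have := hHi _ hcl
        rw [Finset.card_image_of_injOn hinj] at this
        omega
    have hsum : ∑ i : Fin c, ((Finset.univ.filter (fun v => C v = i)).card
        + (if i ∈ T then 1 else 0)) ≤ ∑ _i : Fin c, 2 :=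
      Finset.sum_le_sum (fun i _ => key i)
    rw [Finset.sum_add_distrib] at hsum
    have h1 : ∑ i : Fin c, (if i ∈ T then 1 else 0) = T.card := by
      simp [Finset.sum_ite_mem]
    have h2 : ∑ _i : Fin c, (2 : ℕ) = 2 * c := by
      rw [Finset.sum_const, Finset.card_univ, Fintype.card_fin, smul_eq_mul, mul_comm]
    have h3 : (Finset.univ : Finset (Fin (r + m))).card = r + m := by
      rw [Finset.card_univ, Fintype.card_fin]
    rw [h1, h2] at hsum
    rw [h3] at hcard
    omega

theorem stmt11 (m k : ℕ) (hm : 1 ≤ m) (hk : 1 ≤ k) (hmk : k + 3 ≤ m)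
    (hR : 2 * m - 1 < RamseyTri (m - k)) :
    ∀ r, m - 1 ≤ r → Fv r (r - k + 1) ≤ r + m := by
  classical
  -- extract the Ramsey graph
  have hne : 2 * m - 1 ∉ {n | ∀ m', n ≤ m' → ∀ G : SimpleGraph (Fin m'),
      (∃ S : Finset (Fin m'), G.IsNClique (m - k) S)
      ∨ (∃ S : Finset (Fin m'), Gᶜ.IsNClique 3 S)} := by
    intro hmem
    have := Nat.sInf_le hmem
    rw [RamseyTri] at hR
    omega
  simp only [Set.mem_setOf_eq] at hne
  push_neg at hne
  obtain ⟨N, hN, G', hG1, hG2⟩ := hne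
  let e : Fin (2 * m - 1) → Fin N := Fin.castLE hN
  have heinj : Function.Injective e := Fin.castLE_injective hN
  let H : SimpleGraph (Fin (2 * m - 1)) := G'.comap e
  have hHc : ∀ s : Finset (Fin (2 * m - 1)), H.IsClique s → s.card + k + 1 ≤ m := by
    intro s hs
    by_contra hcon
    obtain ⟨u, hu, hcard⟩ := Finset.exists_subset_card_eq (s := s) (n := m - k) (by omega)
    refine hG1 ((u.image e)) ⟨?_, ?_⟩
    · intro a ha b hb hab
      simp only [Finset.coe_image, Set.mem_image, Finset.mem_coe] at ha hb
      obtain ⟨x, hx, rfl⟩ := ha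
      obtain ⟨y, hy, rfl⟩ := hb
      have hxy : x ≠ y := fun h => hab (by rw [h])
      exact (hs.subset hu) hx hy hxy
    · rw [Finset.card_image_of_injective _ heinj, hcard]
  have hHi : ∀ s : Finset (Fin (2 * m - 1)), Hᶜ.IsClique s → s.card ≤ 2 := by
    intro s hs
    by_contra hcon
    obtain ⟨u, hu, hcard⟩ := Finset.exists_subset_card_eq (s := s) (n := 3) (by omega)
    refine hG2 ((u.image e)) ⟨?_, ?_⟩
    · intro a ha b hb hab
      simp only [Finset.coe_image, Set.mem_image, Finset.mem_coe] at ha hb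
      obtain ⟨x, hx, rfl⟩ := ha
      obtain ⟨y, hy, rfl⟩ := hb
      have hxy : x ≠ y := fun h => hab (by rw [h])
      have := (hs.subset hu) hx hy hxy
      exact ⟨hab, this.2⟩
    · rw [Finset.card_image_of_injective _ heinj, hcard]
  intro r hr
  obtain ⟨G, hG, hchi⟩ := key_construction m k r hk hmk (by omega) H hHc hHi
  exact Nat.sInf_le ⟨G, hG, hchi⟩
end

section
/- Let x ≥ 0 and y be integers, and let G_0 be a graph of minimum order in the nonempty family M(x,y). Then |V(G_0)| ≤ 2χ(G_0) − 1 and |V(G_0)| ≥ 4f(G_0) − 2x − 1. -/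
set_option linter.unusedSectionVars false
set_option maxHeartbeats 1000000

/-- `f(G) = χ(G) − cl(G)`. -/
noncomputable def fDiff {V : Type*} (G : SimpleGraph V) : ℕ := chi G - G.cliqueNum

/-- Membership in the family `M(x,y) = {G : |V(G)| < χ(G) + 2f(G) − x and f(G) ≤ y}`. -/
def inM (x y : ℤ) {V : Type*} [Fintype V] (G : SimpleGraph V) : Prop :=
  (Fintype.card V : ℤ) < chi G + 2 * fDiff G - x ∧ (fDiff G : ℤ) ≤ y

/-- The set of orders of members of `M(x,y)`. -/
def McardSet (x y : ℤ) : Set ℕ := {n | ∃ G : SimpleGraph (Fin n), inM x y G}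


section helpers
variable {V : Type*} [Fintype V] (G : SimpleGraph V)

lemma chi_colorable : G.Colorable (chi G) := G.colorable_chromaticNumber_of_fintype

lemma chi_le {n : ℕ} (h : G.Colorable n) : chi G ≤ n := by
  have := h.chromaticNumber_le
  exact ENat.toNat_le_of_le_coe this

lemma chi_le_card_s15 : chi G ≤ Fintype.card V := chi_le G G.colorable_of_fintype

lemma cliqueNum_le_chi : G.cliqueNum ≤ chi G := by
  obtain ⟨s, hs⟩ := G.exists_isNClique_cliqueNum
  have := hs.isClique.card_le_of_colorable (chi_colorable G)
  rwa [hs.card_eq] at this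

end helpers

section emb
variable {V W : Type*} [Fintype V] [Fintype W] {G : SimpleGraph V} {H : SimpleGraph W}

lemma chi_le_of_embedding (e : G ↪g H) : chi G ≤ chi H :=
  chi_le G ((chi_colorable H).of_hom e.toHom)

lemma cliqueNum_le_of_embedding (e : G ↪g H) : G.cliqueNum ≤ H.cliqueNum := by
  obtain ⟨s, hs⟩ := G.exists_isNClique_cliqueNum
  have hc : H.IsClique (s.map e.toEmbedding) := by
    rw [Finset.coe_map]
    intro a ha b hb hab
    obtain ⟨a', ha', rfl⟩ := ha
    obtain ⟨b', hb', rfl⟩ := hb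
    have : a' ≠ b' := fun h => hab (by rw [h])
    exact e.map_adj_iff.mpr (hs.isClique ha' hb' this)
  have := hc.card_le_cliqueNum
  rwa [Finset.card_map, hs.card_eq] at this

lemma chi_eq_of_iso (e : G ≃g H) : chi G = chi H :=
  le_antisymm (chi_le_of_embedding e.toEmbedding) (chi_le_of_embedding e.symm.toEmbedding)

lemma cliqueNum_eq_of_iso (e : G ≃g H) : G.cliqueNum = H.cliqueNum :=
  le_antisymm (cliqueNum_le_of_embedding e.toEmbedding)
    (cliqueNum_le_of_embedding e.symm.toEmbedding)

end emb

section more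
variable {V W : Type*} [Fintype V] [Fintype W] {G : SimpleGraph V} {H : SimpleGraph W}

lemma fDiff_cast (G : SimpleGraph V) : (fDiff G : ℤ) = (chi G : ℤ) - G.cliqueNum := by
  have := cliqueNum_le_chi G
  unfold fDiff
  omega

lemma inM_of_iso (e : G ≃g H) {x y : ℤ} (h : inM x y G) : inM x y H := by
  obtain ⟨h1, h2⟩ := h
  have hc : Fintype.card V = Fintype.card W := Fintype.card_congr e.toEquiv
  have hchi := chi_eq_of_iso e
  have hcl := cliqueNum_eq_of_iso e
  constructor
  · rw [← hc, fDiff_cast, ← hchi, ← hcl, ← fDiff_cast]; exact h1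
  · rw [fDiff_cast, ← hchi, ← hcl, ← fDiff_cast]; exact h2

/-- The central minimality consequence. -/
lemma key {x y : ℤ} (hG : inM x y G)
    (hmin : ∀ n ∈ McardSet x y, Fintype.card V ≤ n)
    (s : Set V) [Fintype ↥s]
    (hcard : Fintype.card ↥s < Fintype.card V)
    (hf : (fDiff (G.induce s) : ℤ) ≤ (fDiff G : ℤ))
    (hineq : 3 * (chi G : ℤ) - 2 * G.cliqueNum - ((Fintype.card V : ℤ) - Fintype.card ↥s)
      ≤ 3 * (chi (G.induce s) : ℤ) - 2 * ((G.induce s).cliqueNum : ℤ)) : False := by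
  have hx : (x : ℤ) ≤ 3 * (chi G : ℤ) - 2 * G.cliqueNum - Fintype.card V - 1 := by
    have := hG.1
    rw [fDiff_cast] at this
    omega
  have hin : inM x y (G.induce s) := by
    constructor
    · rw [fDiff_cast]
      omega
    · exact le_trans hf hG.2
  have hiso := (G.induce s).overFinIso rfl
  have : (Fintype.card ↥s) ∈ McardSet x y :=
    ⟨(G.induce s).overFin rfl, inM_of_iso hiso hin⟩
  exact absurd (hmin _ this) (by omega)

end more

section ind
variable {V : Type*} [Fintype V] {G : SimpleGraph V}

lemma chi_induce_le (s : Set V) [Fintype ↥s] : chi (G.induce s) ≤ chi G :=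
  chi_le_of_embedding (SimpleGraph.Embedding.induce s)

lemma cliqueNum_induce_le (s : Set V) [Fintype ↥s] : (G.induce s).cliqueNum ≤ G.cliqueNum :=
  cliqueNum_le_of_embedding (SimpleGraph.Embedding.induce s)

lemma chi_le_induce_compl_add_one (C : Set V) [Fintype ↥(Cᶜ : Set V)]
    (hC : ∀ u ∈ C, ∀ v ∈ C, u ≠ v → ¬ G.Adj u v) :
    chi G ≤ chi (G.induce (Cᶜ : Set V)) + 1 := by
  classical
  set k := chi (G.induce (Cᶜ : Set V)) with hk
  obtain ⟨col⟩ := chi_colorable (G.induce (Cᶜ : Set V))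
  refine chi_le G ⟨SimpleGraph.Coloring.mk
    (fun v => if h : v ∈ C then Fin.last k else (col ⟨v, h⟩).castSucc) ?_⟩
  intro a b hab
  by_cases ha : a ∈ C <;> by_cases hb : b ∈ C
  · exact absurd (hC a ha b hb (G.ne_of_adj hab) hab) (by simp)
  · simp only [dif_pos ha, dif_neg hb]
    exact (Fin.ne_last_of_lt (Fin.castSucc_lt_last _)).symm
  · simp only [dif_neg ha, dif_pos hb]
    exact Fin.ne_last_of_lt (Fin.castSucc_lt_last _)
  · simp only [dif_neg ha, dif_neg hb]
    have : (G.induce (Cᶜ : Set V)).Adj ⟨a, ha⟩ ⟨b, hb⟩ := hab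
    have := col.valid this
    simpa [Fin.castSucc_inj] using this

lemma card_le_cliqueNum_induce (s : Set V) [Fintype ↥s] (K : Finset V)
    (hK : G.IsClique ↑K) (hsub : ↑K ⊆ s) : K.card ≤ (G.induce s).cliqueNum := by
  classical
  let f : {a // a ∈ K} → ↥s := fun a => ⟨a.1, hsub a.2⟩
  have hf : Function.Injective f := by
    intro a b hab
    exact Subtype.ext (congrArg (fun x : ↥s => x.1) hab :)
  let t : Finset ↥s := K.attach.map ⟨f, hf⟩
  have htc : (G.induce s).IsClique ↑t := by
    intro a ha b hb hab
    simp only [t, Finset.coe_map, Set.mem_image, Finset.mem_coe, Finset.mem_attach,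
      true_and] at ha hb
    obtain ⟨a', rfl⟩ := ha
    obtain ⟨b', rfl⟩ := hb
    have hne : (a' : V) ≠ (b' : V) := by
      intro h
      exact hab (by simp [f, Subtype.ext h])
    exact hK a'.2 b'.2 hne
  have := htc.card_le_cliqueNum
  simpa [t] using this

end ind

section mainlemmas
variable {V : Type*} [Fintype V] {G : SimpleGraph V} {x y : ℤ}

lemma no_smaller (hmin : ∀ n ∈ McardSet x y, Fintype.card V ≤ n)
    (s : Set V) [Fintype ↥s]
    (hcard : Fintype.card ↥s < Fintype.card V)
    (hin : inM x y (G.induce s)) : False := by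
  have hiso := (G.induce s).overFinIso rfl
  have : (Fintype.card ↥s) ∈ McardSet x y :=
    ⟨(G.induce s).overFin rfl, inM_of_iso hiso hin⟩
  exact absurd (hmin _ this) (by omega)

lemma key' (hG : inM x y G)
    (hmin : ∀ n ∈ McardSet x y, Fintype.card V ≤ n)
    (s : Set V) [Fintype ↥s]
    (hcard : Fintype.card ↥s < Fintype.card V)
    (hf : (fDiff (G.induce s) : ℤ) ≤ (fDiff G : ℤ))
    (hineq : 3 * (chi G : ℤ) - 2 * G.cliqueNum - ((Fintype.card V : ℤ) - Fintype.card ↥s)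
      ≤ 3 * (chi (G.induce s) : ℤ) - 2 * ((G.induce s).cliqueNum : ℤ)) : False := by
  have hx : (x : ℤ) ≤ 3 * (chi G : ℤ) - 2 * G.cliqueNum - Fintype.card V - 1 := by
    have := hG.1
    rw [fDiff_cast] at this
    omega
  refine no_smaller hmin s hcard ⟨?_, le_trans hf hG.2⟩
  rw [fDiff_cast]
  omega

end mainlemmas

theorem stmt15 {V : Type*} [Fintype V] (x y : ℤ) (hx : 0 ≤ x)
    (G₀ : SimpleGraph V) (hG₀ : inM x y G₀)
    (hmin : ∀ n ∈ McardSet x y, Fintype.card V ≤ n) :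
    (Fintype.card V : ℤ) ≤ 2 * chi G₀ - 1 ∧
      4 * (fDiff G₀ : ℤ) - 2 * x - 1 ≤ (Fintype.card V : ℤ) := by
  classical
  set n := Fintype.card V with hn
  set c := chi G₀ with hc
  set w := G₀.cliqueNum with hw
  have hwc : w ≤ c := cliqueNum_le_chi G₀
  have hcn : c ≤ n := chi_le_card_s15 G₀
  have hfD : (fDiff G₀ : ℤ) = (c : ℤ) - w := fDiff_cast G₀
  have hx' : (x : ℤ) ≤ 3 * (c : ℤ) - 2 * w - n - 1 := by
    have := hG₀.1; rw [hfD] at this; omega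
  have hf1 : w + 1 ≤ c := by omega
  have hc1 : 1 ≤ c := by omega
  have hn1 : 1 ≤ n := by omega
  have hw1 : 1 ≤ w := by
    have : Nonempty V := Fintype.card_pos_iff.mp (by omega)
    obtain ⟨v₀⟩ := this
    have hcl : G₀.IsClique ({v₀} : Finset V) := by
      simp [SimpleGraph.isClique_iff, Set.pairwise_singleton]
    have := hcl.card_le_cliqueNum
    simpa using this
  have hc2 : 2 ≤ c := by omega
  -- Part A
  have partA : (n : ℤ) ≤ 2 * c - 1 := by
    by_contra hA'
    have hA : 2 * c ≤ n := by omega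
    obtain ⟨K, hK⟩ := G₀.exists_isNClique_cliqueNum
    have hKcard : K.card = w := hK.card_eq
    have hvK : ∃ v, v ∉ K := by
      by_contra h
      push_neg at h
      have := Finset.card_le_card (fun v _ => h v : Finset.univ ⊆ K)
      simp [hKcard] at this
      omega
    obtain ⟨v, hv⟩ := hvK
    have hcards₁ : Fintype.card ↥(({v} : Set V)ᶜ) = n - 1 := by
      rw [Fintype.card_compl_set]
      simp [hn]
    have homega₁ : Fintype.card ↥(({v} : Set V)ᶜ) < n := by omega
    have hKs₁ : ↑K ⊆ (({v} : Set V)ᶜ) := by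
      intro a ha
      simp only [Set.mem_compl_iff, Set.mem_singleton_iff]
      rintro rfl
      exact hv ha
    have hom1le : (G₀.induce (({v} : Set V)ᶜ)).cliqueNum ≤ w := cliqueNum_induce_le (({v} : Set V)ᶜ)
    have hom1ge : w ≤ (G₀.induce (({v} : Set V)ᶜ)).cliqueNum := by
      have := card_le_cliqueNum_induce (({v} : Set V)ᶜ) K hK.isClique hKs₁
      omega
    have hchi1le : chi (G₀.induce (({v} : Set V)ᶜ)) ≤ c := chi_induce_le (({v} : Set V)ᶜ)
    have hchi1 : chi (G₀.induce (({v} : Set V)ᶜ)) ≤ c - 1 := by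
      by_contra hcc
      have hcc' : chi (G₀.induce (({v} : Set V)ᶜ)) = c := by omega
      refine key' hG₀ hmin (({v} : Set V)ᶜ) homega₁ ?_ ?_
      · rw [fDiff_cast, fDiff_cast, hcc', ← hc, ← hw]
        omega
      · rw [hcc', ← hc, ← hw, hcards₁]
        omega
    obtain ⟨col1⟩ : (G₀.induce (({v} : Set V)ᶜ)).Colorable (c - 1) :=
      (chi_colorable _).mono hchi1
    have hc1pos : 0 < c - 1 := by omega
    let f0 : V → Fin (c - 1) := fun u =>
      if h : u = v then ⟨0, hc1pos⟩ else col1 ⟨u, by simp [h]⟩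
    have hpig : ∃ i ∈ (Finset.univ : Finset (Fin (c - 1))),
        2 < ((Finset.univ.erase v).filter (fun u => f0 u = i)).card := by
      apply Finset.exists_lt_card_fiber_of_mul_lt_card_of_maps_to
      · intro a _; exact Finset.mem_univ _
      · rw [Finset.card_erase_of_mem (Finset.mem_univ v)]
        simp only [Finset.card_univ, Fintype.card_fin]
        omega
    obtain ⟨i, -, hi⟩ := hpig
    set C : Set V := {u | u ≠ v ∧ f0 u = i} with hC
    have hCcard : 3 ≤ Fintype.card ↥C := by
      have : Fintype.card ↥C = ((Finset.univ.erase v).filter (fun u => f0 u = i)).card := by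
        rw [Fintype.card_subtype]
        congr 1
        ext a
        simp [hC, Finset.mem_erase, and_comm]
      omega
    have hvC : v ∉ C := by simp [hC]
    have hCind : ∀ u ∈ C, ∀ u' ∈ C, u ≠ u' → ¬ G₀.Adj u u' := by
      intro u hu u' hu' hne hadj
      obtain ⟨huv, hfu⟩ := hu
      obtain ⟨huv', hfu'⟩ := hu'
      have hfu2 : col1 ⟨u, by simp [huv]⟩ = i := by simpa [f0, huv] using hfu
      have hfu2' : col1 ⟨u', by simp [huv']⟩ = i := by simpa [f0, huv'] using hfu'
      have : (G₀.induce (({v} : Set V)ᶜ)).Adj ⟨u, by simp [huv]⟩ ⟨u', by simp [huv']⟩ := hadj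
      exact col1.valid this (hfu2.trans hfu2'.symm)
    have hcardCc : Fintype.card ↥(Cᶜ) = n - Fintype.card ↥C := by
      rw [Fintype.card_compl_set]
    have hCle : Fintype.card ↥C ≤ n := by
      rw [hn]
      exact Fintype.card_le_of_injective _ Subtype.val_injective
    have hchi2ge : c ≤ chi (G₀.induce (Cᶜ : Set V)) + 1 := by
      rw [hc]
      exact chi_le_induce_compl_add_one C hCind
    have hchi2le : chi (G₀.induce (Cᶜ : Set V)) ≤ c - 1 := by
      refine chi_le _ ⟨SimpleGraph.Coloring.mk
        (fun u => if h : (u : V) = v then i else col1 ⟨u.1, by simp [h]⟩) ?_⟩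
      rintro ⟨a, ha⟩ ⟨b, hb⟩ hadj
      have hadj' : G₀.Adj a b := hadj
      by_cases h1 : a = v <;> by_cases h2 : b = v
      · exact absurd (h1.trans h2.symm) (G₀.ne_of_adj hadj')
      · simp only [dif_pos h1, dif_neg h2]
        intro hcol
        exact hb ⟨h2, by simpa [f0, h2] using hcol.symm⟩
      · simp only [dif_neg h1, dif_pos h2]
        intro hcol
        exact ha ⟨h1, by simpa [f0, h1] using hcol⟩
      · simp only [dif_neg h1, dif_neg h2]
        have : (G₀.induce (({v} : Set V)ᶜ)).Adj ⟨a, by simp [h1]⟩ ⟨b, by simp [h2]⟩ := hadj'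
        exact col1.valid this
    have hom2le : (G₀.induce (Cᶜ : Set V)).cliqueNum ≤ w := cliqueNum_induce_le _
    have hom2ge : w - 1 ≤ (G₀.induce (Cᶜ : Set V)).cliqueNum := by
      have hfilt : (K.filter (fun a => a ∈ C)).card ≤ 1 := by
        rw [Finset.card_le_one]
        intro a ha b hb
        simp only [Finset.mem_filter] at ha hb
        by_contra hab
        exact hCind a ha.2 b hb.2 hab (hK.isClique ha.1 hb.1 hab)
      have hsplit := Finset.card_filter_add_card_filter_not
        (s := K) (p := fun a => a ∈ C)
      have hK'clique : G₀.IsClique ↑(K.filter (fun a => ¬ a ∈ C)) :=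
        hK.isClique.subset (Finset.coe_subset.mpr (Finset.filter_subset _ _))
      have hK'sub : ↑(K.filter (fun a => ¬ a ∈ C)) ⊆ (Cᶜ : Set V) := by
        intro a ha
        simp only [Finset.coe_filter, Set.mem_setOf_eq] at ha
        exact ha.2
      have := card_le_cliqueNum_induce (Cᶜ : Set V) _ hK'clique hK'sub
      omega
    refine key' hG₀ hmin (Cᶜ : Set V) (by omega) ?_ ?_
    · rw [fDiff_cast, fDiff_cast, ← hc, ← hw]
      have := cliqueNum_le_chi (G₀.induce (Cᶜ : Set V))
      omega
    · rw [← hc, ← hw, hcardCc]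
      omega
  refine ⟨partA, ?_⟩
  rw [hfD]
  by_contra hB'
  have hB : (n : ℤ) ≤ 4 * ((c : ℤ) - w) - 2 * x - 2 := by omega
  by_cases hcase : (c : ℤ) + 2 * ((c : ℤ) - w) - x - 1 ≤ (n : ℤ)
  · omega
  · have hx2 : (x : ℤ) ≤ 3 * (c : ℤ) - 2 * w - n - 2 := by omega
    by_cases hnc : n = c
    · -- G₀ must be complete, contradiction
      by_cases hcomp : ∀ u v' : V, u ≠ v' → G₀.Adj u v'
      · have huniv : G₀.IsClique ↑(Finset.univ : Finset V) := by
          intro a _ b _ hab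
          exact hcomp a b hab
        have := huniv.card_le_cliqueNum
        simp only [Finset.card_univ] at this
        rw [← hn, ← hw] at this
        omega
      · push_neg at hcomp
        obtain ⟨u, v', huv', hnadj⟩ := hcomp
        have hcol : G₀.Colorable (Fintype.card {z : V // z ≠ u}) := by
          refine SimpleGraph.Coloring.colorable (SimpleGraph.Coloring.mk
            (fun z => if h : z = u then ⟨v', Ne.symm huv'⟩ else ⟨z, h⟩) ?_)
          intro a b hadj
          by_cases h1 : a = u <;> by_cases h2 : b = u
          · exact absurd (h1.trans h2.symm) (G₀.ne_of_adj hadj)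
          · simp only [dif_pos h1, dif_neg h2]
            intro hcon
            have : v' = b := congrArg Subtype.val hcon
            subst h1
            rw [← this] at hadj
            exact hnadj hadj
          · simp only [dif_neg h1, dif_pos h2]
            intro hcon
            have : a = v' := congrArg Subtype.val hcon
            subst h2
            rw [this] at hadj
            exact hnadj hadj.symm
          · simp only [dif_neg h1, dif_neg h2]
            intro hcon
            have : a = b := congrArg Subtype.val hcon
            exact G₀.ne_of_adj hadj this
        have hcard : Fintype.card {z : V // z ≠ u} = n - 1 := by
          have := Fintype.card_subtype_compl (fun z : V => z = u)
          simp only [Fintype.card_subtype_eq] at this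
          rw [hn]
          convert this using 2
        have := chi_le G₀ hcol
        rw [← hc, hcard] at this
        omega
    · -- n > c : pigeonhole on an optimal coloring of G₀
      have hncgt : c < n := by omega
      obtain ⟨col0⟩ : G₀.Colorable c := by rw [hc]; exact chi_colorable G₀
      have hpig : ∃ i : Fin c, 1 < (Finset.univ.filter (fun u => col0 u = i)).card := by
        have := Fintype.exists_lt_card_fiber_of_mul_lt_card (f := col0) (n := 1)
          (by simp only [Fintype.card_fin, mul_one]; rw [← hn]; omega)
        simpa using this
      obtain ⟨i, hi⟩ := hpig
      set C : Set V := {u | col0 u = i} with hC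
      have hCcard : 2 ≤ Fintype.card ↥C := by
        have : Fintype.card ↥C = (Finset.univ.filter (fun u => col0 u = i)).card := by
          rw [Fintype.card_subtype]
          congr 1
        omega
      have hCind : ∀ u ∈ C, ∀ u' ∈ C, u ≠ u' → ¬ G₀.Adj u u' := by
        intro a ha b hb hne hadj
        exact col0.valid hadj (ha.trans hb.symm)
      have hcardCc : Fintype.card ↥(Cᶜ) = n - Fintype.card ↥C := by
        rw [Fintype.card_compl_set]
      have hCle : Fintype.card ↥C ≤ n := by
        rw [hn]
        exact Fintype.card_le_of_injective _ Subtype.val_injective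
      have hchi2ge : c ≤ chi (G₀.induce (Cᶜ : Set V)) + 1 := by
        rw [hc]
        exact chi_le_induce_compl_add_one C hCind
      have hchi2le : chi (G₀.induce (Cᶜ : Set V)) ≤ c - 1 := by
        have hcol2 : (G₀.induce (Cᶜ : Set V)).Colorable
            (Fintype.card {j : Fin c // j ≠ i}) := by
          refine SimpleGraph.Coloring.colorable (SimpleGraph.Coloring.mk
            (fun u => ⟨col0 u.1, u.2⟩) ?_)
          rintro ⟨a, ha⟩ ⟨b, hb⟩ hadj
          intro hcon
          have : col0 a = col0 b := congrArg Subtype.val hcon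
          exact col0.valid hadj this
        have hcard : Fintype.card {j : Fin c // j ≠ i} = c - 1 := by
          have := Fintype.card_subtype_compl (fun j : Fin c => j = i)
          simp only [Fintype.card_subtype_eq, Fintype.card_fin] at this
          convert this using 2
        rw [hcard] at hcol2
        exact chi_le _ hcol2
      obtain ⟨K, hK⟩ := G₀.exists_isNClique_cliqueNum
      have hom2le : (G₀.induce (Cᶜ : Set V)).cliqueNum ≤ w := cliqueNum_induce_le _
      have hom2ge : w - 1 ≤ (G₀.induce (Cᶜ : Set V)).cliqueNum := by
        have hfilt : (K.filter (fun a => a ∈ C)).card ≤ 1 := by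
          rw [Finset.card_le_one]
          intro a ha b hb
          simp only [Finset.mem_filter] at ha hb
          by_contra hab
          exact hCind a ha.2 b hb.2 hab (hK.isClique ha.1 hb.1 hab)
        have hsplit := Finset.card_filter_add_card_filter_not
          (s := K) (p := fun a => a ∈ C)
        have hK'clique : G₀.IsClique ↑(K.filter (fun a => ¬ a ∈ C)) :=
          hK.isClique.subset (Finset.coe_subset.mpr (Finset.filter_subset _ _))
        have hK'sub : ↑(K.filter (fun a => ¬ a ∈ C)) ⊆ (Cᶜ : Set V) := by
          intro a ha
          simp only [Finset.coe_filter, Set.mem_setOf_eq] at ha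
          exact ha.2
        have := card_le_cliqueNum_induce (Cᶜ : Set V) _ hK'clique hK'sub
        have hKcard : K.card = w := hK.card_eq
        omega
      refine no_smaller (G := G₀) hmin (Cᶜ : Set V) (by omega) ⟨?_, ?_⟩
      · rw [fDiff_cast]
        have := cliqueNum_le_chi (G₀.induce (Cᶜ : Set V))
        rw [hcardCc]
        omega
      · rw [fDiff_cast]
        have hy : (fDiff G₀ : ℤ) ≤ y := hG₀.2
        rw [hfD] at hy
        omega
end

section
/- Let r ≥ 5. Then F_v(2_r; r) ≤ r + 5: the graph K_{r−5} + C_5 + C_5 (join of a complete graph on r−5 vertices with two 5-cycles) has r+5 vertices, chromatic number r+1, and clique number r−1. -/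
/-- The join `G₁ + G₂` of two graphs on disjoint vertex sets: all edges of `G₁`
and `G₂` together with all edges between the two vertex sets. -/
def graphJoin {V₁ V₂ : Type*} (G₁ : SimpleGraph V₁) (G₂ : SimpleGraph V₂) :
    SimpleGraph (V₁ ⊕ V₂) where
  Adj a b := match a, b with
    | .inl x, .inl y => G₁.Adj x y
    | .inr x, .inr y => G₂.Adj x y
    | _, _ => True
  symm := by constructor; rintro (x|x) (y|y) h <;> simp_all <;> exact h.symm
  loopless := by constructor; rintro (x|x) h <;> simp_all

/-- The graph `K_{r-5} + C₅ + C₅`. -/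
def Pgraph (r : ℕ) : SimpleGraph ((Fin (r - 5) ⊕ Fin 5) ⊕ Fin 5) :=
  graphJoin (graphJoin (SimpleGraph.completeGraph (Fin (r - 5))) (SimpleGraph.cycleGraph 5))
    (SimpleGraph.cycleGraph 5)

open SimpleGraph Finset

section Aux

variable {V₁ V₂ : Type*} {G : SimpleGraph V₁} {H : SimpleGraph V₂}

lemma colorable_graphJoin {m n : ℕ} (hG : G.Colorable m) (hH : H.Colorable n) :
    (graphJoin G H).Colorable (m + n) := by
  obtain ⟨cG⟩ := hG
  obtain ⟨cH⟩ := hH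
  refine ⟨SimpleGraph.Coloring.mk
    (Sum.elim (fun x => Fin.castAdd n (cG x)) (fun x => Fin.natAdd m (cH x))) ?_⟩
  rintro (x|x) (y|y) h heq
  · exact cG.valid h (by simpa [Fin.ext_iff] using heq)
  · have := congrArg Fin.val heq
    simp only [Sum.elim_inl, Sum.elim_inr, Fin.coe_castAdd, Fin.coe_natAdd] at this
    have := (cG x).isLt
    omega
  · have := congrArg Fin.val heq
    simp only [Sum.elim_inl, Sum.elim_inr, Fin.coe_castAdd, Fin.coe_natAdd] at this
    have := (cG y).isLt
    omega
  · exact cH.valid h (by simpa [Fin.ext_iff] using heq)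

lemma graphJoin_colorable_split [Fintype V₁] [Fintype V₂] {n : ℕ}
    (h : (graphJoin G H).Colorable n) :
    ∃ a b, a + b ≤ n ∧ G.Colorable a ∧ H.Colorable b := by
  classical
  obtain ⟨c⟩ := h
  set A : Finset (Fin n) := Finset.univ.image (fun x : V₁ => c (Sum.inl x)) with hA
  set B : Finset (Fin n) := Finset.univ.image (fun x : V₂ => c (Sum.inr x)) with hB
  have hdisj : Disjoint A B := by
    simp only [Finset.disjoint_left, hA, hB, Finset.mem_image]
    rintro y ⟨x, -, rfl⟩ ⟨z, -, hz⟩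
    exact c.valid (show (graphJoin G H).Adj (Sum.inl x) (Sum.inr z) from trivial) hz.symm
  refine ⟨A.card, B.card, ?_, ?_, ?_⟩
  · calc A.card + B.card = (A ∪ B).card := (Finset.card_union_of_disjoint hdisj).symm
      _ ≤ Fintype.card (Fin n) := Finset.card_le_univ _
      _ = n := Fintype.card_fin n
  · have cA : G.Coloring A :=
      SimpleGraph.Coloring.mk (fun x => ⟨c (Sum.inl x), by simp [hA]⟩)
        (fun {v w} hadj heq =>
          c.valid (show (graphJoin G H).Adj (Sum.inl v) (Sum.inl w) from hadj)
            (by simpa using congrArg Subtype.val heq))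
    simpa [Fintype.card_coe] using cA.colorable
  · have cB : H.Coloring B :=
      SimpleGraph.Coloring.mk (fun x => ⟨c (Sum.inr x), by simp [hB]⟩)
        (fun {v w} hadj heq =>
          c.valid (show (graphJoin G H).Adj (Sum.inr v) (Sum.inr w) from hadj)
            (by simpa using congrArg Subtype.val heq))
    simpa [Fintype.card_coe] using cB.colorable

lemma cliqueNumSet_nonempty : ({n | ∃ s, G.IsNClique n s} : Set ℕ).Nonempty :=
  ⟨0, ∅, isNClique_empty.mpr rfl⟩

lemma cliqueNum_graphJoin [Fintype V₁] [Fintype V₂] :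
    (graphJoin G H).cliqueNum = G.cliqueNum + H.cliqueNum := by
  apply le_antisymm
  · apply csSup_le cliqueNumSet_nonempty
    rintro n ⟨s, hs⟩
    have h1 : G.IsClique s.toLeft := by
      intro x hx y hy hne
      exact hs.1 (by simpa using hx) (by simpa using hy) (by simpa using hne)
    have h2 : H.IsClique s.toRight := by
      intro x hx y hy hne
      exact hs.1 (by simpa using hx) (by simpa using hy) (by simpa using hne)
    have e1 := SimpleGraph.IsClique.card_le_cliqueNum (tc := h1)
    have e2 := SimpleGraph.IsClique.card_le_cliqueNum (tc := h2)
    have e3 := Finset.card_toLeft_add_card_toRight (u := s)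
    rw [← hs.2]
    omega
  · obtain ⟨s, hs⟩ := G.exists_isNClique_cliqueNum
    obtain ⟨t, ht⟩ := H.exists_isNClique_cliqueNum
    have hc : (graphJoin G H).IsClique (s.disjSum t) := by
      rintro (x|x) hx (y|y) hy hne
      · exact hs.1 (by simpa using hx) (by simpa using hy) (by simpa using hne)
      · trivial
      · trivial
      · exact ht.1 (by simpa using hx) (by simpa using hy) (by simpa using hne)
    have := SimpleGraph.IsClique.card_le_cliqueNum (tc := hc)
    rwa [Finset.card_disjSum, hs.2, ht.2] at this

lemma cliqueNum_completeGraph (m : ℕ) : (completeGraph (Fin m)).cliqueNum = m := by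
  apply le_antisymm
  · apply csSup_le cliqueNumSet_nonempty
    rintro n ⟨s, hs⟩
    rw [← hs.2]
    simpa using Finset.card_le_univ s
  · have hc : (completeGraph (Fin m)).IsClique (Finset.univ : Finset (Fin m)) :=
      fun x _ y _ h => h
    simpa using SimpleGraph.IsClique.card_le_cliqueNum (tc := hc)

lemma cycle5_cliqueFree : (SimpleGraph.cycleGraph 5).CliqueFree 3 := by
  have h : ∀ t : Finset (Fin 5), ¬(SimpleGraph.cycleGraph 5).IsNClique 3 t := by decide
  exact fun t ht => h t ht

lemma cliqueNum_cycle5 : (SimpleGraph.cycleGraph 5).cliqueNum = 2 := by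
  apply le_antisymm
  · apply csSup_le cliqueNumSet_nonempty
    rintro n ⟨s, hs⟩
    by_contra hn
    push_neg at hn
    obtain ⟨t, hts, htc⟩ := Finset.exists_subset_card_eq (s := s) (n := 3) (by rw [hs.2]; omega)
    exact cycle5_cliqueFree t ⟨hs.1.subset (Finset.coe_subset.mpr hts), htc⟩
  · have hc : (SimpleGraph.cycleGraph 5).IsClique ({0, 1} : Finset (Fin 5)) := by decide
    have := SimpleGraph.IsClique.card_le_cliqueNum (tc := hc)
    simpa using this

lemma cycle5_colorable_3 : (SimpleGraph.cycleGraph 5).Colorable 3 := by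
  refine ⟨SimpleGraph.Coloring.mk ![0, 1, 0, 1, 2] ?_⟩
  intro v w h
  revert h
  revert w
  revert v
  decide

lemma cycle5_three_le {n : ℕ} (h : (SimpleGraph.cycleGraph 5).Colorable n) : 3 ≤ n := by
  have h01 : (SimpleGraph.cycleGraph 5).Adj 0 1 := by decide
  have h12 : (SimpleGraph.cycleGraph 5).Adj 1 2 := by decide
  have h23 : (SimpleGraph.cycleGraph 5).Adj 2 3 := by decide
  have h34 : (SimpleGraph.cycleGraph 5).Adj 3 4 := by decide
  have h40 : (SimpleGraph.cycleGraph 5).Adj 4 0 := by decide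
  let p : (SimpleGraph.cycleGraph 5).Walk 0 0 :=
    .cons h01 (.cons h12 (.cons h23 (.cons h34 (.cons h40 .nil))))
  have hw : 3 ≤ (SimpleGraph.cycleGraph 5).chromaticNumber :=
    p.three_le_chromaticNumber_of_odd_loop (by simp [p]; decide)
  have := h.chromaticNumber_le
  exact_mod_cast hw.trans this

lemma complete_colorable_le {m n : ℕ} (h : (completeGraph (Fin m)).Colorable n) : m ≤ n := by
  have hc : (completeGraph (Fin m)).IsClique (Finset.univ : Finset (Fin m)) :=
    fun x _ y _ hne => hne
  simpa using hc.card_le_of_colorable h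

lemma chromaticNumber_Pgraph (r : ℕ) (hr : 5 ≤ r) :
    (Pgraph r).chromaticNumber = (r + 1 : ℕ) := by
  have h1 : (completeGraph (Fin (r - 5))).Colorable (r - 5) := by
    simpa using (completeGraph (Fin (r - 5))).colorable_of_fintype
  have hcol : (Pgraph r).Colorable (r + 1) := by
    have := colorable_graphJoin (colorable_graphJoin h1 cycle5_colorable_3) cycle5_colorable_3
    have he : r - 5 + 3 + 3 = r + 1 := by omega
    rwa [he] at this
  apply le_antisymm
  · exact_mod_cast hcol.chromaticNumber_le
  · rw [SimpleGraph.chromaticNumber]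
    refine le_iInf₂ fun n hn => ?_
    obtain ⟨a, b, hab, ha, hb⟩ := graphJoin_colorable_split hn
    obtain ⟨a1, a2, ha12, ha1, ha2⟩ := graphJoin_colorable_split ha
    have k1 := complete_colorable_le ha1
    have k2 := cycle5_three_le ha2
    have k3 := cycle5_three_le hb
    exact_mod_cast (by omega : r + 1 ≤ n)

lemma cliqueNum_Pgraph (r : ℕ) (hr : 5 ≤ r) : (Pgraph r).cliqueNum = r - 1 := by
  unfold Pgraph
  rw [cliqueNum_graphJoin, cliqueNum_graphJoin, cliqueNum_completeGraph, cliqueNum_cycle5]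
  omega

lemma iso_cliqueNum_le {W₁ W₂ : Type*} [Fintype W₂] {G₁ : SimpleGraph W₁}
    {G₂ : SimpleGraph W₂} (φ : G₁ ≃g G₂) : G₁.cliqueNum ≤ G₂.cliqueNum := by
  classical
  apply csSup_le cliqueNumSet_nonempty
  rintro n ⟨s, hs⟩
  have hc : G₂.IsClique (s.image φ) := by
    intro x hx y hy hne
    simp only [Finset.coe_image, Set.mem_image, Finset.mem_coe] at hx hy
    obtain ⟨a, ha, rfl⟩ := hx
    obtain ⟨b, hb, rfl⟩ := hy
    exact φ.map_rel_iff.mpr (hs.1 ha hb (fun hab => hne (by rw [hab])))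
  have := SimpleGraph.IsClique.card_le_cliqueNum (tc := hc)
  rwa [Finset.card_image_of_injective _ φ.injective, hs.2] at this

end Aux

theorem stmt18 (r : ℕ) (hr : 5 ≤ r) :
    Fintype.card ((Fin (r - 5) ⊕ Fin 5) ⊕ Fin 5) = r + 5 ∧
    chi (Pgraph r) = r + 1 ∧ (Pgraph r).cliqueNum = r - 1 ∧
    Fv r r ≤ r + 5 := by
  have hcard : Fintype.card ((Fin (r - 5) ⊕ Fin 5) ⊕ Fin 5) = r + 5 := by
    simp; omega
  have hchi : chi (Pgraph r) = r + 1 := by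
    unfold chi
    rw [chromaticNumber_Pgraph r hr, ENat.toNat_coe]
  have hclique := cliqueNum_Pgraph r hr
  refine ⟨hcard, hchi, hclique, ?_⟩
  apply Nat.sInf_le
  let e : ((Fin (r - 5) ⊕ Fin 5) ⊕ Fin 5) ≃ Fin (r + 5) :=
    ((finSumFinEquiv.sumCongr (Equiv.refl (Fin 5))).trans finSumFinEquiv).trans
      (finCongr (by omega))
  let G' : SimpleGraph (Fin (r + 5)) := (Pgraph r).comap e.symm.toEmbedding
  have φ : G' ≃g Pgraph r := SimpleGraph.Iso.comap e.symm (Pgraph r)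
  refine ⟨G', ?_, ?_⟩
  · have := iso_cliqueNum_le φ
    rw [hclique] at this
    omega
  · have h1 : (Pgraph r).chromaticNumber ≤ G'.chromaticNumber :=
      SimpleGraph.chromaticNumber_mono_of_hom φ.symm.toEmbedding.toHom
    rw [chromaticNumber_Pgraph r hr] at h1
    unfold chi
    have h2 : ((r + 1 : ℕ) : ℕ∞).toNat ≤ G'.chromaticNumber.toNat := by
      apply ENat.toNat_le_toNat h1
      have : G'.chromaticNumber ≤ (r + 5 : ℕ) := by
        exact_mod_cast (G'.colorable_of_fintype.mono (by simp)).chromaticNumber_le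
      exact ne_top_of_le_ne_top (ENat.coe_ne_top _) this
    rw [ENat.toNat_coe] at h2
    exact h2
end
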